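/- arXiv:0705.2451 — 2 statements merged into one kernel-verified Lean document; each statement's English description precedes it below -/
import Mathlib

section
/- Let p be a prime and q = p^t for some t ≥ 0. Then for every S ⊆ [q-1], β_q(S) ≡ (-1)^{|S|} (mod p). -/
open Finset

/-- The descent set of a permutation of `{1,…,n}` (written as a permutation of `Fin n`),
as a subset of `[n-1] = {1,…,n-1}`: `i` is a descent if `π_i > π_{i+1}` (1-indexed). -/
def descSet (n : ℕ) (π : Equiv.Perm (Fin n)) : Finset ℕ :=
  (Finset.Icc 1 (n - 1)).filter (fun i =>
    ∃ h : i < n, π ⟨i, h⟩ < π ⟨i - 1, by omega⟩)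

/-- `β_n(S)`: the number of permutations of `{1,…,n}` with descent set exactly `S`. -/
def descBeta (n : ℕ) (S : Finset ℕ) : ℕ :=
  (Finset.univ.filter (fun π : Equiv.Perm (Fin n) => descSet n π = S)).card

/-- `α_n(S)`: the number of permutations of `{1,…,n}` with descent set contained in `S`. -/
def descAlpha (n : ℕ) (S : Finset ℕ) : ℕ :=
  (Finset.univ.filter (fun π : Equiv.Perm (Fin n) => descSet n π ⊆ S)).card


lemma eq_one_of_descSet_empty {n : ℕ} (π : Equiv.Perm (Fin n)) (h : descSet n π = ∅) :
    π = 1 := by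
  match n with
  | 0 => exact Subsingleton.elim _ _
  | Nat.succ m =>
    have hsm : StrictMono π := by
      rw [Fin.strictMono_iff_lt_succ]
      intro i
      have hne : (i.val + 1) ∉ descSet (m + 1) π := by rw [h]; exact Finset.notMem_empty _
      rw [descSet, Finset.mem_filter] at hne
      push_neg at hne
      have h1 : i.val + 1 ∈ Finset.Icc 1 (m + 1 - 1) := by
        rw [Finset.mem_Icc]; omega
      have h2 := hne h1 (by omega)
      have hcs : (⟨i.val + 1 - 1, by omega⟩ : Fin (m+1)) = Fin.castSucc i := by
        apply Fin.ext; simp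
      have hss : (⟨i.val + 1, by omega⟩ : Fin (m+1)) = Fin.succ i := by
        apply Fin.ext; simp
      rw [hcs, hss] at h2
      exact lt_of_le_of_ne h2 (π.injective.ne (Fin.castSucc_lt_succ (i := i)).ne)
    have hr : Set.range ⇑π = Set.range (id : Fin (m+1) → Fin (m+1)) := by
      simp [π.surjective.range_eq]
    have hwf : WellFoundedLT (Fin (m+1)) := inferInstance
    have := (hsm.range_inj strictMono_id).mp hr
    exact Equiv.ext fun x => congrFun this x

lemma descSet_one (n : ℕ) : descSet n (1 : Equiv.Perm (Fin n)) = ∅ := by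
  rw [descSet, Finset.filter_eq_empty_iff]
  intro i hi
  rintro ⟨h, hlt⟩
  rw [Finset.mem_Icc] at hi
  simp only [Equiv.Perm.one_apply, Fin.mk_lt_mk] at hlt
  omega

lemma descAlpha_empty (n : ℕ) : descAlpha n ∅ = 1 := by
  rw [descAlpha, Finset.card_eq_one]
  refine ⟨1, ?_⟩
  ext π
  simp only [Finset.mem_filter, Finset.mem_univ, true_and, Finset.mem_singleton,
    Finset.subset_empty]
  constructor
  · exact fun h => eq_one_of_descSet_empty π h
  · rintro rfl; exact descSet_one n

lemma descAlpha_eq_sum (n : ℕ) (T : Finset ℕ) :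
    descAlpha n T = ∑ R ∈ T.powerset, descBeta n R := by
  rw [descAlpha, Finset.card_eq_sum_card_fiberwise
    (f := descSet n) (t := T.powerset)
    (fun π hπ => Finset.mem_powerset.mpr (Finset.mem_filter.mp hπ).2)]
  refine Finset.sum_congr rfl fun R hR => ?_
  rw [descBeta]
  congr 1
  ext π
  simp only [Finset.mem_filter, Finset.mem_univ, true_and]
  constructor
  · exact fun h => h.2
  · intro h; exact ⟨h ▸ Finset.mem_powerset.mp hR, h⟩


lemma exists_good_perm {q : ℕ} (A B : Finset (Fin q)) (hAB : A.card = B.card) :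
    ∃ σ : Equiv.Perm (Fin q), (∀ x, x ∈ A ↔ σ x ∈ B) ∧
      (∀ x y, (x ∈ A ↔ y ∈ A) → (σ x < σ y ↔ x < y)) := by
  classical
  have hA : A.card = A.card := rfl
  have hB : B.card = A.card := hAB.symm
  have hAc : Aᶜ.card = q - A.card := by
    rw [Finset.card_compl]; simp
  have hBc : Bᶜ.card = q - A.card := by
    rw [Finset.card_compl]; simp [hB]
  let eA : {x : Fin q // x ∈ A} ≃o {x : Fin q // x ∈ B} :=
    (A.orderIsoOfFin hA).symm.trans (B.orderIsoOfFin hB)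
  let eC : {x : Fin q // x ∈ Aᶜ} ≃o {x : Fin q // x ∈ Bᶜ} :=
    (Aᶜ.orderIsoOfFin hAc).symm.trans (Bᶜ.orderIsoOfFin hBc)
  let eC' : {x : Fin q // ¬ x ∈ A} ≃ {x : Fin q // ¬ x ∈ B} :=
    (Equiv.subtypeEquivRight (fun x => by simp)).trans
      (eC.toEquiv.trans (Equiv.subtypeEquivRight (fun x => by simp)))
  let σ : Equiv.Perm (Fin q) :=
    ((Equiv.sumCompl (· ∈ A)).symm.trans ((Equiv.sumCongr eA.toEquiv eC').trans
      (Equiv.sumCompl (· ∈ B))))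
  have hpos : ∀ x (hx : x ∈ A), σ x = (eA ⟨x, hx⟩ : Fin q) := by
    intro x hx
    simp only [σ, Equiv.trans_apply, Equiv.sumCompl_symm_apply_of_pos hx,
      Equiv.sumCongr_apply, Sum.map_inl, Equiv.sumCompl_apply_inl]
    rfl
  have hneg : ∀ x (hx : ¬ x ∈ A), σ x = ((eC ⟨x, by simpa using hx⟩ : {x : Fin q // x ∈ Bᶜ}) : Fin q) := by
    intro x hx
    simp only [σ, Equiv.trans_apply, Equiv.sumCompl_symm_apply_of_neg hx,
      Equiv.sumCongr_apply, Sum.map_inr, Equiv.sumCompl_apply_inr]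
    rfl
  have hmem : ∀ x, x ∈ A ↔ σ x ∈ B := by
    intro x
    by_cases hx : x ∈ A
    · simp only [hx, true_iff, hpos x hx]
      exact (eA ⟨x, hx⟩).2
    · simp only [hx, false_iff, hneg x hx]
      have := (eC ⟨x, by simpa using hx⟩).2
      rw [Finset.mem_compl] at this
      exact this
  refine ⟨σ, hmem, ?_⟩
  intro x y hxy
  by_cases hx : x ∈ A
  · have hy : y ∈ A := hxy.mp hx
    rw [hpos x hx, hpos y hy]
    rw [show ((eA ⟨x, hx⟩ : Fin q) < (eA ⟨y, hy⟩ : Fin q)) ↔ eA ⟨x, hx⟩ < eA ⟨y, hy⟩ from Iff.rfl,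
      eA.lt_iff_lt]
    exact Iff.rfl
  · have hy : ¬ y ∈ A := fun hy => hx (hxy.mpr hy)
    rw [hneg x hx, hneg y hy]
    rw [show (((eC ⟨x, _⟩ : {x : Fin q // x ∈ Bᶜ}) : Fin q) < ((eC ⟨y, _⟩ : {x : Fin q // x ∈ Bᶜ}) : Fin q)) ↔ eC ⟨x, by simpa using hx⟩ < eC ⟨y, by simpa using hy⟩ from Iff.rfl,
      eC.lt_iff_lt]
    exact Iff.rfl

lemma p_dvd_descAlpha {p t : ℕ} (hp : p.Prime) {T : Finset ℕ}
    (hT : T ⊆ Finset.Icc 1 (p ^ t - 1)) (hne : T.Nonempty) :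
    p ∣ descAlpha (p ^ t) T := by
  classical
  set q := p ^ t with hq
  have hq1 : 1 ≤ q := Nat.one_le_pow _ _ hp.pos
  set m := T.min' hne with hm
  have hmT : m ∈ T := T.min'_mem hne
  have hmIcc := hT hmT
  rw [Finset.mem_Icc] at hmIcc
  have hmq : m < q := by omega
  set B0 : Finset (Fin q) := Finset.Iio ⟨m, hmq⟩ with hB0
  have hB0card : B0.card = m := by rw [hB0, Fin.card_Iio]
  have hmem_B0 : ∀ x : Fin q, x ∈ B0 ↔ (x : ℕ) < m := by
    intro x; simp [hB0, Fin.lt_def]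
  set s := Finset.univ.filter (fun π : Equiv.Perm (Fin q) => descSet q π ⊆ T) with hs
  set f : Equiv.Perm (Fin q) → Finset (Fin q) := fun π => B0.image π with hf
  have hfm : ∀ π : Equiv.Perm (Fin q), (f π).card = m := fun π => by
    rw [hf, Finset.card_image_of_injective _ π.injective, hB0card]
  have hft : ∀ π ∈ s, f π ∈ Finset.powersetCard m (Finset.univ : Finset (Fin q)) :=
    fun π _ => Finset.mem_powersetCard.mpr ⟨Finset.subset_univ _, hfm π⟩
  have hmem : ∀ (π : Equiv.Perm (Fin q)) (A : Finset (Fin q)), f π = A →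
      ∀ x, π x ∈ A ↔ x ∈ B0 := by
    intro π A hA x
    rw [← hA, hf]
    exact π.injective.mem_finset_image
  have key : ∀ A B : Finset (Fin q), A.card = m → B.card = m →
      (s.filter fun π => f π = A).card ≤ (s.filter fun π => f π = B).card := by
    intro A B hA hB
    obtain ⟨σ, hσmem, hσlt⟩ := exists_good_perm A B (hA.trans hB.symm)
    have hσim : A.image σ = B := by
      apply Finset.eq_of_subset_of_card_le
      · intro y hy
        obtain ⟨x, hx, rfl⟩ := Finset.mem_image.mp hy
        exact (hσmem x).mp hx
      · rw [Finset.card_image_of_injective _ σ.injective, hA, hB]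
    apply Finset.card_le_card_of_injOn (fun π => σ * π)
    · intro π hπ
      rw [Finset.mem_coe, Finset.mem_filter] at hπ ⊢
      obtain ⟨hπs, hπA⟩ := hπ
      rw [hs, Finset.mem_filter] at hπs
      have hmemA := hmem π A hπA
      have hfB : f (σ * π) = B := by
        rw [hf]
        show B0.image ⇑(σ * π) = B
        rw [Equiv.Perm.coe_mul, ← Finset.image_image, show B0.image ⇑π = A from hπA, hσim]
      refine ⟨?_, hfB⟩
      rw [hs, Finset.mem_filter]
      refine ⟨Finset.mem_univ _, ?_⟩
      intro i hi
      rw [descSet, Finset.mem_filter] at hi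
      obtain ⟨hiIcc, hlt, hdesc⟩ := hi
      rw [Finset.mem_Icc] at hiIcc
      by_cases him : i = m
      · exact him ▸ hmT
      · have hxy : (π ⟨i, hlt⟩ ∈ A ↔ π ⟨i - 1, by omega⟩ ∈ A) := by
          rw [hmemA, hmemA, hmem_B0, hmem_B0]
          simp only [Fin.val_mk]
          omega
        rw [Equiv.Perm.mul_apply, Equiv.Perm.mul_apply] at hdesc
        have hd : π ⟨i, hlt⟩ < π ⟨i - 1, by omega⟩ := (hσlt _ _ hxy).mp hdesc
        apply hπs.2
        rw [descSet, Finset.mem_filter]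
        exact ⟨by rw [Finset.mem_Icc]; omega, hlt, hd⟩
    · intro π₁ _ π₂ _ h
      exact mul_left_cancel h
  obtain ⟨A₀, hA₀⟩ := Finset.powersetCard_nonempty.mpr
    (by rw [Finset.card_univ, Fintype.card_fin]; omega :
      m ≤ (Finset.univ : Finset (Fin q)).card)
  have hkeq : ∀ A ∈ Finset.powersetCard m (Finset.univ : Finset (Fin q)),
      (s.filter fun π => f π = A).card = (s.filter fun π => f π = A₀).card := by
    intro A hA
    have h1 := (Finset.mem_powersetCard.mp hA).2
    have h2 := (Finset.mem_powersetCard.mp hA₀).2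
    exact le_antisymm (key A A₀ h1 h2) (key A₀ A h2 h1)
  have hcard : descAlpha q T = ∑ A ∈ Finset.powersetCard m (Finset.univ : Finset (Fin q)),
      (s.filter fun π => f π = A).card := Finset.card_eq_sum_card_fiberwise hft
  rw [hcard, Finset.sum_congr rfl hkeq, Finset.sum_const, smul_eq_mul,
    Finset.card_powersetCard, Finset.card_univ, Fintype.card_fin]
  exact Dvd.dvd.mul_right (hp.dvd_choose_pow (by omega) (by omega)) _

/-- For a prime power `q = p^t`, `β_q(S) ≡ (-1)^{|S|} (mod p)`. -/
theorem stmt_12 (p t : ℕ) (hp : p.Prime) (S : Finset ℕ)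
    (hS : S ⊆ Finset.Icc 1 (p ^ t - 1)) :
    (descBeta (p ^ t) S : ℤ) ≡ (-1) ^ S.card [ZMOD p] := by
  classical
  revert hS
  induction S using Finset.strongInduction with
  | _ S ih =>
    intro hS
    rw [← ZMod.intCast_eq_intCast_iff]
    push_cast
    set q := p ^ t with hq
    have hαsum : ((descAlpha q S : ℕ) : ZMod p) = ∑ R ∈ S.powerset, ((descBeta q R : ℕ) : ZMod p) := by
      have := congrArg (Nat.cast : ℕ → ZMod p) (descAlpha_eq_sum q S)
      push_cast at this
      exact this
    by_cases hSe : S = ∅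
    · subst hSe
      rw [Finset.powerset_empty, Finset.sum_singleton, descAlpha_empty] at hαsum
      simp [← hαsum]
    · have hzero : ((descAlpha q S : ℕ) : ZMod p) = 0 :=
        (ZMod.natCast_eq_zero_iff _ _).mpr
          (p_dvd_descAlpha hp hS (Finset.nonempty_iff_ne_empty.mpr hSe))
      have hih : ∀ R ∈ S.powerset.erase S, ((descBeta q R : ℕ) : ZMod p) = (-1) ^ R.card := by
        intro R hR
        rw [Finset.mem_erase, Finset.mem_powerset] at hR
        have hR' : R ⊂ S := lt_of_le_of_ne hR.2 hR.1
        have := ih R hR' (hR.2.trans hS)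
        rw [← ZMod.intCast_eq_intCast_iff] at this
        push_cast at this
        exact this
      have hZ : (∑ R ∈ S.powerset, (-1 : ZMod p) ^ R.card) = 0 := by
        have h := Finset.sum_powerset_neg_one_pow_card_of_nonempty
          (x := S) (Finset.nonempty_iff_ne_empty.mpr hSe)
        have := congrArg (Int.cast : ℤ → ZMod p) h
        push_cast at this
        exact this
      have e1 : ((descAlpha q S : ℕ) : ZMod p)
          = ((descBeta q S : ℕ) : ZMod p) + ∑ R ∈ S.powerset.erase S, (-1 : ZMod p) ^ R.card := by
        rw [hαsum, ← Finset.add_sum_erase _ _ (Finset.mem_powerset_self S),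
          Finset.sum_congr rfl hih]
      have e2 : (-1 : ZMod p) ^ S.card + ∑ R ∈ S.powerset.erase S, (-1 : ZMod p) ^ R.card = 0 := by
        rw [← Finset.add_sum_erase _ (fun R => (-1 : ZMod p) ^ R.card)
          (Finset.mem_powerset_self S)] at hZ
        exact hZ
      linear_combination hzero - e1 - e2
end

section
/- Let p be a prime and q = p^t for some t ≥ 0. Then for every S ⊆ [2q-1], β_{2q}(S) ≡ (-1)^{|S \ {q}|} (mod p). -/
open Finset

namespace DescAux

lemma descSet_subset_iff {n : ℕ} (π : Equiv.Perm (Fin n)) (T : Finset ℕ) :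
    descSet n π ⊆ T ↔ ∀ i, ∀ h : i < n, 1 ≤ i → i ∉ T →
      π ⟨i - 1, by omega⟩ < π ⟨i, h⟩ := by
  constructor
  · intro hsub i h h1 hiT
    rcases lt_trichotomy (π ⟨i - 1, by omega⟩) (π ⟨i, h⟩) with hlt | heq | hgt
    · exact hlt
    · exfalso
      have h2 : (⟨i - 1, by omega⟩ : Fin n) = ⟨i, h⟩ := π.injective heq
      have h3 := congrArg Fin.val h2
      simp only [] at h3
      omega
    · exact absurd (hsub (mem_filter.2 ⟨mem_Icc.2 ⟨h1, by omega⟩, ⟨h, hgt⟩⟩)) hiT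
  · intro hmono i hi
    by_contra hiT
    obtain ⟨hIcc, h, hlt⟩ := mem_filter.1 hi
    exact absurd hlt (asymm (hmono i h (mem_Icc.1 hIcc).1 hiT))

/-- chained comparisons: if no index in `(a,b]` is in `T`, then `π a < π b`. -/
lemma chain_lt {n : ℕ} {π : Equiv.Perm (Fin n)} {T : Finset ℕ}
    (hπ : ∀ i, ∀ h : i < n, 1 ≤ i → i ∉ T → π ⟨i - 1, by omega⟩ < π ⟨i, h⟩) :
    ∀ b, ∀ hb : b < n, ∀ a, ∀ hab : a < b, (∀ i, a < i → i ≤ b → i ∉ T) →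
      π ⟨a, by omega⟩ < π ⟨b, hb⟩ := by
  intro b
  induction b with
  | zero => intro hb a hab; omega
  | succ b ih =>
    intro hb a hab hfree
    have h1 : π ⟨b, by omega⟩ < π ⟨b + 1, hb⟩ := by
      have := hπ (b + 1) hb (by omega) (hfree (b + 1) (by omega) le_rfl)
      simpa using this
    rcases eq_or_lt_of_le (Nat.le_of_lt_succ hab) with rfl | hab'
    · exact h1
    · exact lt_trans (ih (by omega) a hab' (fun i hi hi' => hfree i hi (by omega))) h1

lemma descAlpha_empty (n : ℕ) : descAlpha n ∅ = 1 := by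
  unfold descAlpha
  have : (Finset.univ.filter (fun π : Equiv.Perm (Fin n) => descSet n π ⊆ ∅))
      = {Equiv.refl (Fin n)} := by
    ext π
    simp only [mem_filter, mem_univ, true_and, mem_singleton]
    constructor
    · intro hd
      have hmono := (descSet_subset_iff π ∅).1 (by simpa using hd)
      have hsm : StrictMono (π : Fin n → Fin n) := by
        intro a b hab
        exact chain_lt (fun i h h1 _ => hmono i h h1 (notMem_empty i)) b b.isLt a hab
          (fun i _ _ => notMem_empty i)
      have hu : ((univ : Finset (Fin n))).card = n := by simp
      have h1 : (π : Fin n → Fin n) = (univ : Finset (Fin n)).orderEmbOfFin hu :=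
        Finset.orderEmbOfFin_unique hu (fun x => mem_univ _) hsm
      have h2 : (id : Fin n → Fin n) = (univ : Finset (Fin n)).orderEmbOfFin hu :=
        Finset.orderEmbOfFin_unique hu (fun x => mem_univ _) strictMono_id
      apply Equiv.ext
      intro x
      have := congrFun (h1.trans h2.symm) x
      simpa using this
    · rintro rfl
      intro i hi
      obtain ⟨hIcc, h, hlt⟩ := mem_filter.1 hi
      have := (mem_Icc.1 hIcc).1
      exfalso
      simp only [Equiv.refl_apply, Fin.mk_lt_mk] at hlt
      omega
  rw [this, card_singleton]

section Rec

variable {n m : ℕ}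

lemma card_compl' {A : Finset (Fin n)} (hA : A.card = m) : Aᶜ.card = n - m := by
  rw [card_compl, hA, Fintype.card_fin]

/-- the permutation built from an `m`-set `A` and a pattern `σ`. -/
def buildF (A : Finset (Fin n)) (hA : A.card = m) (σ : Equiv.Perm (Fin m)) (j : Fin n) :
    Fin n :=
  if h : (j : ℕ) < m then A.orderEmbOfFin hA (σ ⟨j, h⟩)
  else Aᶜ.orderEmbOfFin (card_compl' hA) ⟨(j : ℕ) - m, by have := j.isLt; omega⟩

lemma buildF_inj (A : Finset (Fin n)) (hA : A.card = m) (σ : Equiv.Perm (Fin m)) :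
    Function.Injective (buildF A hA σ) := by
  intro j1 j2 heq
  unfold buildF at heq
  split_ifs at heq with h1 h2 h2
  · have := σ.injective ((A.orderEmbOfFin hA).injective heq)
    have := congrArg Fin.val this
    simp only [] at this
    exact Fin.ext this
  · exfalso
    have m1 := Finset.orderEmbOfFin_mem A hA (σ ⟨j1, h1⟩)
    have m2 := Finset.orderEmbOfFin_mem Aᶜ (card_compl' hA)
      ⟨(j2 : ℕ) - m, by have := j2.isLt; omega⟩
    rw [← heq] at m2
    exact (mem_compl.1 m2) m1
  · exfalso
    have m1 := Finset.orderEmbOfFin_mem A hA (σ ⟨j2, h2⟩)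
    have m2 := Finset.orderEmbOfFin_mem Aᶜ (card_compl' hA)
      ⟨(j1 : ℕ) - m, by have := j1.isLt; omega⟩
    rw [heq] at m2
    exact (mem_compl.1 m2) m1
  · have := (Aᶜ.orderEmbOfFin (card_compl' hA)).injective heq
    have := congrArg Fin.val this
    simp only [] at this
    have hj1 := j1.isLt
    have hj2 := j2.isLt
    exact Fin.ext (by omega)

noncomputable def buildPerm (A : Finset (Fin n)) (hA : A.card = m) (σ : Equiv.Perm (Fin m)) :
    Equiv.Perm (Fin n) :=
  Equiv.ofBijective _ ((Finite.injective_iff_bijective).1 (buildF_inj A hA σ))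

lemma buildPerm_apply (A : Finset (Fin n)) (hA : A.card = m) (σ : Equiv.Perm (Fin m))
    (j : Fin n) : buildPerm A hA σ j = buildF A hA σ j := rfl

lemma buildPerm_desc {T : Finset ℕ} (hmT : m ∈ T) (hmax : ∀ i ∈ T, i ≤ m)
    (A : Finset (Fin n)) (hA : A.card = m) (σ : Equiv.Perm (Fin m))
    (hσ : descSet m σ ⊆ T.erase m) :
    descSet n (buildPerm A hA σ) ⊆ T := by
  rw [descSet_subset_iff]
  intro i h h1 hiT
  have him : i ≠ m := fun e => hiT (e ▸ hmT)
  rw [buildPerm_apply, buildPerm_apply]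
  rcases lt_or_gt_of_ne him with hlt | hgt
  · -- i < m
    have hi1 : i - 1 < m := by omega
    unfold buildF
    rw [dif_pos (show ((⟨i - 1, by omega⟩ : Fin n) : ℕ) < m from hi1),
      dif_pos (show ((⟨i, h⟩ : Fin n) : ℕ) < m from hlt)]
    apply (A.orderEmbOfFin hA).strictMono
    have := (descSet_subset_iff σ (T.erase m)).1 hσ i hlt h1
      (fun hmem => hiT (mem_of_mem_erase hmem))
    exact this
  · -- i > m
    have hi1 : ¬ ((⟨i - 1, by omega⟩ : Fin n) : ℕ) < m := by simp; omega
    have hi2 : ¬ ((⟨i, h⟩ : Fin n) : ℕ) < m := by simp; omega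
    unfold buildF
    rw [dif_neg hi1, dif_neg hi2]
    apply (Aᶜ.orderEmbOfFin (card_compl' hA)).strictMono
    simp only [Fin.mk_lt_mk]
    omega

variable (hmn : m ≤ n)

def imgA (π : Equiv.Perm (Fin n)) : Finset (Fin n) :=
  Finset.image (fun j : Fin m => π (Fin.castLE hmn j)) univ

lemma imgA_card (π : Equiv.Perm (Fin n)) : (imgA hmn π).card = m := by
  rw [imgA, card_image_of_injective _
      (fun a b h => Fin.castLE_injective hmn (π.injective h)),
    card_univ, Fintype.card_fin]

lemma mem_imgA (π : Equiv.Perm (Fin n)) (j : Fin m) :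
    π (Fin.castLE hmn j) ∈ imgA hmn π :=
  mem_image.2 ⟨j, mem_univ _, rfl⟩

def fwdF (π : Equiv.Perm (Fin n)) (j : Fin m) : Fin m :=
  ((imgA hmn π).orderIsoOfFin (imgA_card hmn π)).symm
    ⟨π (Fin.castLE hmn j), mem_imgA hmn π j⟩

lemma fwdF_inj (π : Equiv.Perm (Fin n)) : Function.Injective (fwdF hmn π) := by
  intro j1 j2 heq
  have := ((imgA hmn π).orderIsoOfFin (imgA_card hmn π)).symm.injective heq
  have := Subtype.ext_iff.1 this
  exact Fin.castLE_injective hmn (π.injective this)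

noncomputable def fwdPerm (π : Equiv.Perm (Fin n)) : Equiv.Perm (Fin m) :=
  Equiv.ofBijective _ ((Finite.injective_iff_bijective).1 (fwdF_inj hmn π))

lemma fwdPerm_apply (π : Equiv.Perm (Fin n)) (j : Fin m) :
    fwdPerm hmn π j = fwdF hmn π j := rfl

lemma orderEmb_fwdF (π : Equiv.Perm (Fin n)) (j : Fin m) :
    (imgA hmn π).orderEmbOfFin (imgA_card hmn π) (fwdF hmn π j) = π (Fin.castLE hmn j) := by
  rw [← Finset.coe_orderIsoOfFin_apply, fwdF, OrderIso.apply_symm_apply]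

lemma fwdPerm_desc {T : Finset ℕ} (hT : T ⊆ Icc 1 (n - 1)) (hmT : m ∈ T)
    (π : Equiv.Perm (Fin n)) (hπ : descSet n π ⊆ T) :
    descSet m (fwdPerm hmn π) ⊆ T.erase m := by
  intro i hi
  obtain ⟨hIcc, h, hlt⟩ := mem_filter.1 hi
  obtain ⟨hi1, hi2⟩ := mem_Icc.1 hIcc
  rw [fwdPerm_apply, fwdPerm_apply] at hlt
  have hπlt : π (Fin.castLE hmn ⟨i, h⟩) < π (Fin.castLE hmn ⟨i - 1, by omega⟩) := by
    have h2 := ((imgA hmn π).orderIsoOfFin (imgA_card hmn π)).symm.lt_iff_lt.1 hlt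
    exact Subtype.mk_lt_mk.1 h2
  have hmem : i ∈ T := by
    apply hπ
    refine mem_filter.2 ⟨mem_Icc.2 ⟨hi1, ?_⟩, by omega, ?_⟩
    · have hm1 := (mem_Icc.1 (hT hmT)).2
      omega
    · convert hπlt using 2 <;> exact Fin.ext rfl
  exact mem_erase.2 ⟨by omega, hmem⟩

lemma orderEmbOfFin_congr {α : Type*} [LinearOrder α] {s t : Finset α} (hst : s = t) {k : ℕ}
    (h1 : s.card = k) (h2 : t.card = k) (i : Fin k) :
    s.orderEmbOfFin h1 i = t.orderEmbOfFin h2 i := by subst hst; rfl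

lemma alpha_rec {T : Finset ℕ} (hT : T ⊆ Icc 1 (n - 1)) (hmT : m ∈ T)
    (hmax : ∀ i ∈ T, i ≤ m) :
    descAlpha n T = n.choose m * descAlpha m (T.erase m) := by
  have h1m : 1 ≤ m ∧ m ≤ n - 1 := mem_Icc.1 (hT hmT)
  have hmn : m ≤ n := by omega
  have hn : 1 ≤ n := by omega
  -- the equivalence
  let E : {π : Equiv.Perm (Fin n) // descSet n π ⊆ T} ≃
      ({A : Finset (Fin n) // A.card = m} × {σ : Equiv.Perm (Fin m) // descSet m σ ⊆ T.erase m}) :=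
    { toFun := fun π => (⟨imgA hmn π.1, imgA_card hmn π.1⟩,
        ⟨fwdPerm hmn π.1, fwdPerm_desc hmn hT hmT π.1 π.2⟩)
      invFun := fun As => ⟨buildPerm As.1.1 As.1.2 As.2.1,
        buildPerm_desc hmT hmax As.1.1 As.1.2 As.2.1 As.2.2⟩
      left_inv := by
        rintro ⟨π, hπ⟩
        apply Subtype.ext
        apply Equiv.ext
        intro j
        rw [buildPerm_apply]
        unfold buildF
        by_cases hj : (j : ℕ) < m
        · rw [dif_pos hj]
          have : fwdPerm hmn π ⟨(j : ℕ), hj⟩ = fwdF hmn π ⟨(j : ℕ), hj⟩ := rfl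
          rw [this, orderEmb_fwdF]
          exact congrArg π (Fin.ext rfl)
        · rw [dif_neg hj]
          -- tail: π restricted to [m, n) is the increasing enumeration of (imgA)ᶜ
          have hmono := (descSet_subset_iff π T).1 hπ
          set g : Fin (n - m) → Fin n := fun k => π ⟨m + (k : ℕ), by have := k.isLt; omega⟩
            with hg
          have hgmem : ∀ k, g k ∈ (imgA hmn π)ᶜ := by
            intro k
            rw [mem_compl]
            intro hmem
            obtain ⟨j', _, hj'⟩ := mem_image.1 hmem
            have := π.injective hj'
            have := congrArg Fin.val this
            simp only [Fin.coe_castLE] at this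
            have := j'.isLt
            omega
          have hgmono : StrictMono g := by
            intro a b hab
            have hb := b.isLt
            apply chain_lt hmono (m + (b : ℕ)) (by omega) (m + (a : ℕ)) (by omega)
            intro i hi1 hi2 hiT
            have := hmax i hiT
            omega
          have hgeq : g = (imgA hmn π)ᶜ.orderEmbOfFin (card_compl' (imgA_card hmn π)) :=
            Finset.orderEmbOfFin_unique _ hgmem hgmono
          have := congrFun hgeq ⟨(j : ℕ) - m, by have := j.isLt; omega⟩
          rw [← this, hg]
          apply congrArg
          apply Fin.ext
          simp only []
          have := j.isLt
          omega
      right_inv := by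
        rintro ⟨⟨A, hA⟩, ⟨σ, hσ⟩⟩
        have himg : imgA hmn (buildPerm A hA σ) = A := by
          have hfun : ∀ j : Fin m, buildPerm A hA σ (Fin.castLE hmn j)
              = A.orderEmbOfFin hA (σ j) := by
            intro j
            rw [buildPerm_apply]
            unfold buildF
            rw [dif_pos (show ((Fin.castLE hmn j : Fin n) : ℕ) < m from j.isLt)]
            exact congrArg _ (congrArg σ (Fin.ext rfl))
          unfold imgA
          rw [show (fun j : Fin m => buildPerm A hA σ (Fin.castLE hmn j))
              = fun j : Fin m => A.orderEmbOfFin hA (σ j) from funext hfun]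
          apply Finset.coe_injective
          rw [coe_image, coe_univ, Set.image_univ]
          rw [show Set.range (fun j : Fin m => A.orderEmbOfFin hA (σ j))
              = Set.range (A.orderEmbOfFin hA) from σ.surjective.range_comp _]
          exact Finset.range_orderEmbOfFin A hA
        refine Prod.ext (Subtype.ext himg) (Subtype.ext (Equiv.ext fun j => ?_))
        -- fwdPerm of buildPerm = σ
        apply ((imgA hmn (buildPerm A hA σ)).orderEmbOfFin
          (imgA_card hmn (buildPerm A hA σ))).injective
        rw [show (fwdPerm hmn (buildPerm A hA σ)) j = fwdF hmn (buildPerm A hA σ) j from rfl,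
          orderEmb_fwdF]
        rw [buildPerm_apply]
        unfold buildF
        rw [dif_pos (show ((Fin.castLE hmn j : Fin n) : ℕ) < m from j.isLt)]
        rw [orderEmbOfFin_congr himg (imgA_card hmn (buildPerm A hA σ)) hA]
        exact congrArg _ (congrArg σ (Fin.ext rfl)) }
  calc descAlpha n T = Fintype.card {π : Equiv.Perm (Fin n) // descSet n π ⊆ T} :=
        (Fintype.card_subtype _).symm
    _ = Fintype.card ({A : Finset (Fin n) // A.card = m} ×
        {σ : Equiv.Perm (Fin m) // descSet m σ ⊆ T.erase m}) := Fintype.card_congr E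
    _ = n.choose m * descAlpha m (T.erase m) := by
        rw [Fintype.card_prod, Fintype.card_finset_len, Fintype.card_fin,
          Fintype.card_subtype]
        rfl

end Rec

lemma choose_two_pow_mod {p : ℕ} (t : ℕ) (hp : p.Prime) {k : ℕ} (h1 : k ≠ 0)
    (h2 : k ≠ p ^ t) (h3 : k ≠ 2 * p ^ t) : ((2 * p ^ t).choose k : ZMod p) = 0 := by
  rw [show 2 * p ^ t = p ^ t + p ^ t by ring, Nat.add_choose_eq]
  push_cast
  apply Finset.sum_eq_zero
  intro ij hij
  rw [Finset.HasAntidiagonal.mem_antidiagonal] at hij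
  by_cases hi : ij.1 = 0
  · have : ((p ^ t).choose ij.2 : ZMod p) = 0 := by
      rw [ZMod.natCast_eq_zero_iff]
      exact Nat.Prime.dvd_choose_pow hp (by omega) (by omega)
    rw [this, mul_zero]
  · by_cases hi' : ij.1 = p ^ t
    · have : ((p ^ t).choose ij.2 : ZMod p) = 0 := by
        rw [ZMod.natCast_eq_zero_iff]
        exact Nat.Prime.dvd_choose_pow hp (by omega) (by omega)
      rw [this, mul_zero]
    · have : ((p ^ t).choose ij.1 : ZMod p) = 0 := by
        rw [ZMod.natCast_eq_zero_iff]
        exact Nat.Prime.dvd_choose_pow hp hi hi'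
      rw [this, zero_mul]

lemma choose_central_mod {p : ℕ} (t : ℕ) (hp : p.Prime) :
    ((2 * p ^ t).choose (p ^ t) : ZMod p) = 2 := by
  have hq : p ^ t ≠ 0 := (pow_pos hp.pos t).ne'
  rw [show 2 * p ^ t = p ^ t + p ^ t by ring, Nat.add_choose_eq]
  push_cast
  have hsub : ({(0, p ^ t), (p ^ t, 0)} : Finset (ℕ × ℕ)) ⊆ Finset.HasAntidiagonal.antidiagonal (p ^ t) := by
    intro x hx
    rw [Finset.HasAntidiagonal.mem_antidiagonal]
    rcases Finset.mem_insert.1 hx with rfl | hx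
    · simp
    · rw [Finset.mem_singleton] at hx; subst hx; simp
  rw [← Finset.sum_subset hsub]
  · rw [Finset.sum_insert (by
      intro hmem
      rw [Finset.mem_singleton, Prod.ext_iff] at hmem
      exact hq hmem.1.symm)]
    rw [Finset.sum_singleton]
    simp [Nat.choose_self, Nat.choose_zero_right]
    ring
  · intro x hx hnx
    rw [Finset.HasAntidiagonal.mem_antidiagonal] at hx
    have hx1 : x.1 ≠ 0 := by
      intro h0
      apply hnx
      apply Finset.mem_insert.2
      left
      rw [Prod.ext_iff]
      exact ⟨h0, by omega⟩
    have hx2 : x.1 ≠ p ^ t := by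
      intro h0
      apply hnx
      apply Finset.mem_insert.2
      right
      rw [Finset.mem_singleton, Prod.ext_iff]
      exact ⟨h0, by omega⟩
    have : ((p ^ t).choose x.1 : ZMod p) = 0 := by
      rw [ZMod.natCast_eq_zero_iff]
      exact Nat.Prime.dvd_choose_pow hp hx1 hx2
    rw [this, zero_mul]

lemma descAlpha_mod (p t : ℕ) (hp : p.Prime) (S : Finset ℕ)
    (hS : S ⊆ Icc 1 (2 * p ^ t - 1)) :
    (descAlpha (2 * p ^ t) S : ZMod p)
      = if S = ∅ then 1 else if S = {p ^ t} then 2 else 0 := by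
  have hq1 : 1 ≤ p ^ t := Nat.one_le_pow t p hp.pos
  by_cases hS0 : S = ∅
  · subst hS0
    rw [descAlpha_empty]
    simp
  · rw [if_neg hS0]
    have hne : S.Nonempty := nonempty_iff_ne_empty.2 hS0
    set m := S.max' hne with hm
    have hmS : m ∈ S := S.max'_mem hne
    have hmax : ∀ i ∈ S, i ≤ m := fun i hi => S.le_max' i hi
    have hmIcc := mem_Icc.1 (hS hmS)
    rw [alpha_rec hS hmS hmax]
    by_cases hmq : m = p ^ t
    · rw [hmq]
      have hqS : p ^ t ∈ S := hmq ▸ hmS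
      by_cases hSq : S = {p ^ t}
      · rw [if_pos hSq]
        rw [show S.erase (p ^ t) = ∅ by rw [hSq]; exact Finset.erase_singleton _]
        rw [descAlpha_empty]
        push_cast
        rw [mul_one]
        exact choose_central_mod t hp
      · rw [if_neg hSq]
        have hU : (S.erase (p ^ t)).Nonempty := by
          rw [Finset.nonempty_iff_ne_empty]
          intro hemp
          apply hSq
          apply Finset.eq_singleton_iff_unique_mem.2 ⟨hqS, ?_⟩
          intro x hx
          by_contra hxm
          exact (Finset.ne_empty_of_mem (Finset.mem_erase.2 ⟨hxm, hx⟩)) hemp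
        have hUsub : S.erase (p ^ t) ⊆ Icc 1 (p ^ t - 1) := by
          intro y hy
          obtain ⟨hym, hyS⟩ := Finset.mem_erase.1 hy
          have h1 := (mem_Icc.1 (hS hyS)).1
          have h2 := hmax y hyS
          rw [mem_Icc]
          omega
        obtain ⟨m', hm'U, hmax'⟩ : ∃ m' ∈ S.erase (p ^ t), ∀ i ∈ S.erase (p ^ t), i ≤ m' :=
          ⟨(S.erase (p ^ t)).max' hU, (S.erase (p ^ t)).max'_mem hU,
            fun i hi => (S.erase (p ^ t)).le_max' i hi⟩
        have hm'Icc := mem_Icc.1 (hUsub hm'U)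
        rw [alpha_rec hUsub hm'U hmax']
        push_cast
        have hz : ((p ^ t).choose m' : ZMod p) = 0 := by
          rw [ZMod.natCast_eq_zero_iff]
          exact Nat.Prime.dvd_choose_pow hp (by omega) (by omega)
        rw [hz]
        ring
    · have hnotq : S ≠ {p ^ t} := by
        intro h
        apply hmq
        have : m ∈ ({p ^ t} : Finset ℕ) := h ▸ hmS
        simpa using this
      rw [if_neg hnotq]
      have hz : ((2 * p ^ t).choose m : ZMod p) = 0 :=
        choose_two_pow_mod t hp (by omega) hmq (by omega)
      push_cast
      rw [hz]
      ring

lemma descAlpha_eq_sum (n : ℕ) (S : Finset ℕ) :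
    descAlpha n S = ∑ T ∈ S.powerset, descBeta n T := by
  unfold descAlpha descBeta
  rw [Finset.card_eq_sum_card_fiberwise
    (f := descSet n) (t := S.powerset)
    (fun π hπ => mem_powerset.2 (mem_filter.1 hπ).2)]
  apply Finset.sum_congr rfl
  intro T hT
  congr 1
  ext π
  simp only [mem_filter, mem_univ, true_and]
  constructor
  · rintro ⟨_, h⟩; exact h
  · rintro rfl; exact ⟨Finset.le_iff_subset.1 (mem_powerset.1 hT), rfl⟩

lemma sum_powerset_sdiff (q : ℕ) (S : Finset ℕ) :
    ∑ T ∈ S.powerset, (-1 : ℤ) ^ ((T \ {q}).card)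
      = (if S = ∅ then 1 else 0) + (if S = {q} then 2 else 0) := by
  by_cases hq : q ∈ S
  · have hS0 : S ≠ ∅ := fun h => by simp [h] at hq
    rw [if_neg hS0]
    have h1 : S = insert q (S.erase q) := (Finset.insert_erase hq).symm
    have e1 : ∀ T ∈ (S.erase q).powerset, (-1 : ℤ) ^ ((T \ {q}).card) = (-1 : ℤ) ^ T.card := by
      intro T hT
      have hqT : q ∉ T := fun h => Finset.notMem_erase q S (mem_powerset.1 hT h)
      rw [Finset.sdiff_singleton_eq_erase, Finset.erase_eq_of_notMem hqT]
    have e2 : ∀ T ∈ (S.erase q).powerset,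
        (-1 : ℤ) ^ ((insert q T \ {q}).card) = (-1 : ℤ) ^ T.card := by
      intro T hT
      have hqT : q ∉ T := fun h => Finset.notMem_erase q S (mem_powerset.1 hT h)
      rw [Finset.sdiff_singleton_eq_erase, Finset.erase_insert hqT]
    have hLHS : ∑ T ∈ S.powerset, (-1 : ℤ) ^ ((T \ {q}).card)
        = 2 * ∑ T ∈ (S.erase q).powerset, (-1 : ℤ) ^ T.card := by
      conv_lhs => rw [h1]
      rw [Finset.sum_powerset_insert (Finset.notMem_erase q S),
        Finset.sum_congr rfl e1, Finset.sum_congr rfl e2]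
      ring
    rw [hLHS, Finset.sum_powerset_neg_one_pow_card]
    have hiff : S = {q} ↔ S.erase q = ∅ := by
      constructor
      · intro h; rw [h]; exact Finset.erase_singleton q
      · intro h
        rw [h1, h]
        simp
    by_cases h2 : S.erase q = ∅
    · rw [if_pos h2, if_pos (hiff.2 h2)]
      ring
    · rw [if_neg h2, if_neg (fun h => h2 (hiff.1 h))]
      ring
  · have e1 : ∀ T ∈ S.powerset, (-1 : ℤ) ^ ((T \ {q}).card) = (-1 : ℤ) ^ T.card := by
      intro T hT
      have hqT : q ∉ T := fun h => hq (mem_powerset.1 hT h)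
      rw [Finset.sdiff_singleton_eq_erase, Finset.erase_eq_of_notMem hqT]
    rw [Finset.sum_congr rfl e1, Finset.sum_powerset_neg_one_pow_card]
    have hSq : S ≠ {q} := fun h => hq (h ▸ Finset.mem_singleton_self q)
    rw [if_neg hSq, add_zero]

lemma descBeta_mod (p t : ℕ) (hp : p.Prime) :
    ∀ S : Finset ℕ, S ⊆ Icc 1 (2 * p ^ t - 1) →
      (descBeta (2 * p ^ t) S : ZMod p) = (-1) ^ ((S \ {p ^ t}).card) := by
  intro S
  induction S using Finset.strongInduction with
  | _ S ih =>
    intro hS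
    have hsum : (descAlpha (2 * p ^ t) S : ZMod p)
        = ∑ T ∈ S.powerset, (descBeta (2 * p ^ t) T : ZMod p) := by
      rw [descAlpha_eq_sum]
      push_cast
      rfl
    rw [← Finset.add_sum_erase _ _ (Finset.mem_powerset_self S)] at hsum
    have hih : ∀ T ∈ S.powerset.erase S,
        (descBeta (2 * p ^ t) T : ZMod p) = (-1) ^ ((T \ {p ^ t}).card) := by
      intro T hT
      obtain ⟨hne, hsub⟩ := Finset.mem_erase.1 hT
      have hsub' := mem_powerset.1 hsub
      exact ih T (Finset.ssubset_iff_subset_ne.2 ⟨hsub', hne⟩) (hsub'.trans hS)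
    rw [Finset.sum_congr rfl hih] at hsum
    -- full sum
    have hfull : ∑ T ∈ S.powerset, ((-1 : ZMod p)) ^ ((T \ {p ^ t}).card)
        = ((if S = ∅ then 1 else 0) + (if S = {p ^ t} then 2 else 0) : ZMod p) := by
      have h := sum_powerset_sdiff (p ^ t) S
      have := congrArg (fun z : ℤ => (z : ZMod p)) h
      push_cast at this
      convert this using 2 <;> split_ifs <;> push_cast <;> ring
    rw [← Finset.add_sum_erase _ _ (Finset.mem_powerset_self S)] at hfull
    have hαc : (descAlpha (2 * p ^ t) S : ZMod p)
        = ((if S = ∅ then 1 else 0) + (if S = {p ^ t} then 2 else 0) : ZMod p) := by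
      rw [descAlpha_mod p t hp S hS]
      have hq1 : 1 ≤ p ^ t := Nat.one_le_pow t p hp.pos
      by_cases h1 : S = ∅
      · subst h1
        rw [if_pos rfl, if_pos rfl, if_neg (by
          intro h
          have := Finset.mem_singleton_self (p ^ t)
          rw [← h] at this
          exact absurd this (Finset.notMem_empty _))]
        ring
      · rw [if_neg h1, if_neg h1]
        by_cases h2 : S = {p ^ t}
        · simp [h2]
        · simp [h2]
    rw [hαc] at hsum
    rw [hsum] at hfull
    linear_combination -hfull

end DescAux

/-- For a prime power `q = p^t`, `β_{2q}(S) ≡ (-1)^{|S \ {q}|} (mod p)`. -/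
theorem stmt_13 (p t : ℕ) (hp : p.Prime) (S : Finset ℕ)
    (hS : S ⊆ Finset.Icc 1 (2 * p ^ t - 1)) :
    (descBeta (2 * p ^ t) S : ℤ) ≡ (-1) ^ ((S \ {p ^ t}).card) [ZMOD p] := by
  rw [← ZMod.intCast_eq_intCast_iff]
  push_cast
  exact DescAux.descBeta_mod p t hp S hS
end
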